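/- If the pattern p occurs in T_i, then there is a unique index x such that p occurs in the layer of size sw_x but not in the layer of size sw_{x-1} (with sw₀ = 0, layer of size 0 being empty), and for this x, Bitlen(rightmost_i(p)) = b_x. -/
import Mathlib


/-- `w` occurs in `T` starting at (0-based) position `y`. -/
def occursAt {σ : Type*} (T w : List σ) (y : ℕ) : Prop :=
  y + w.length ≤ T.length ∧ (T.drop y).take w.length = w

/-- If the pattern `p` occurs in `T_i`, there is a unique index `x` such that `p` occurs in
the layer of size `sw x` but not in the layer of size `sw (x-1)` (with `sw 0 = 0`, the layer
of size 0 being empty), and for this `x`, `Bitlen (rightmost_i p) = b x`. -/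
theorem stmt10 {σ : Type*} (T : List σ) (i s : ℕ) (Bitlen b sw : ℕ → ℕ) (p : List σ)
    (hs : 1 ≤ s)
    (hmono : ∀ x y, 1 ≤ x → x ≤ y → y ≤ i → Bitlen x ≤ Bitlen y)
    (hb : StrictMonoOn b (Set.Icc 1 s))
    (himg : ∀ v, (∃ j, 1 ≤ j ∧ j ≤ i ∧ Bitlen j = v) ↔ (∃ x, 1 ≤ x ∧ x ≤ s ∧ b x = v))
    (hsw0 : sw 0 = 0)
    (hsw : ∀ x, 1 ≤ x → x ≤ s →
      1 ≤ sw x ∧ sw x ≤ i ∧ Bitlen (sw x) ≤ b x ∧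
      ∀ j, j ≤ i → Bitlen j ≤ b x → j ≤ sw x)
    (hswtop : sw s = i)
    (hocc : ∃ y, occursAt (T.take i) p y)
    (hoffpos : ∀ y, occursAt (T.take i) p y → 1 ≤ i - y - 1) :
    (∃! x, (1 ≤ x ∧ x ≤ s) ∧
        (∃ y, occursAt (T.take i) p y ∧ i - y - 1 ≤ sw x) ∧
        ¬ (∃ y, occursAt (T.take i) p y ∧ i - y - 1 ≤ sw (x - 1))) ∧
    ∀ x, 1 ≤ x → x ≤ s →
      (∃ y, occursAt (T.take i) p y ∧ i - y - 1 ≤ sw x) →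
      ¬ (∃ y, occursAt (T.take i) p y ∧ i - y - 1 ≤ sw (x - 1)) →
      Bitlen (sInf {o | ∃ y, occursAt (T.take i) p y ∧ o = i - y - 1}) = b x := by
  set S : Set ℕ := {o | ∃ y, occursAt (T.take i) p y ∧ o = i - y - 1} with hS
  obtain ⟨y₀, hy₀⟩ := hocc
  have hSne : S.Nonempty := ⟨i - y₀ - 1, y₀, hy₀, rfl⟩
  set m := sInf S with hmdef
  obtain ⟨y₁, hy₁, hm_eq⟩ : m ∈ S := Nat.sInf_mem hSne
  have hm1 : 1 ≤ m := hm_eq ▸ hoffpos y₁ hy₁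
  have hmi : m ≤ i := by omega
  -- key equivalence
  have keyA : ∀ x, 1 ≤ x → x ≤ s →
      ((∃ y, occursAt (T.take i) p y ∧ i - y - 1 ≤ sw x) ↔ Bitlen m ≤ b x) := by
    intro x hx1 hxs
    obtain ⟨h1, h2, h3, h4⟩ := hsw x hx1 hxs
    constructor
    · rintro ⟨y, hy, hle⟩
      have hmle : m ≤ i - y - 1 := Nat.sInf_le ⟨y, hy, rfl⟩
      have : m ≤ sw x := le_trans hmle hle
      exact le_trans (hmono m (sw x) hm1 this h2) h3
    · intro h
      exact ⟨y₁, hy₁, hm_eq ▸ h4 m hmi h⟩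
  obtain ⟨x₀, hx₀1, hx₀s, hbx₀⟩ := (himg (Bitlen m)).mp ⟨m, hm1, hmi, rfl⟩
  -- x₀ satisfies the property
  have hPx₀ : (1 ≤ x₀ ∧ x₀ ≤ s) ∧
      (∃ y, occursAt (T.take i) p y ∧ i - y - 1 ≤ sw x₀) ∧
      ¬ (∃ y, occursAt (T.take i) p y ∧ i - y - 1 ≤ sw (x₀ - 1)) := by
    refine ⟨⟨hx₀1, hx₀s⟩, (keyA x₀ hx₀1 hx₀s).mpr hbx₀.ge, ?_⟩
    rintro ⟨y, hy, hle⟩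
    have hmle : m ≤ i - y - 1 := Nat.sInf_le ⟨y, hy, rfl⟩
    have hmsw : m ≤ sw (x₀ - 1) := le_trans hmle hle
    rcases Nat.eq_or_lt_of_le hx₀1 with h1 | h1
    · rw [← h1] at hmsw; simp [hsw0] at hmsw; omega
    · have hx11 : 1 ≤ x₀ - 1 := by omega
      have hx1s : x₀ - 1 ≤ s := by omega
      obtain ⟨_, h2, h3, _⟩ := hsw (x₀ - 1) hx11 hx1s
      have : Bitlen m ≤ b (x₀ - 1) := le_trans (hmono m (sw (x₀ - 1)) hm1 hmsw h2) h3
      have hlt : b (x₀ - 1) < b x₀ :=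
        hb ⟨hx11, by omega⟩ ⟨hx₀1, hx₀s⟩ (by omega)
      omega
  -- uniqueness
  have huniq : ∀ x, ((1 ≤ x ∧ x ≤ s) ∧
      (∃ y, occursAt (T.take i) p y ∧ i - y - 1 ≤ sw x) ∧
      ¬ (∃ y, occursAt (T.take i) p y ∧ i - y - 1 ≤ sw (x - 1))) → x = x₀ := by
    rintro x ⟨⟨hx1, hxs⟩, hex, hnot⟩
    have hble : Bitlen m ≤ b x := (keyA x hx1 hxs).mp hex
    by_contra hne
    rcases lt_or_gt_of_ne hne with hlt | hgt
    · have : b x < b x₀ := hb ⟨hx1, hxs⟩ ⟨hx₀1, hx₀s⟩ hlt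
      omega
    · have hx11 : 1 ≤ x - 1 := by omega
      have hx1s : x - 1 ≤ s := by omega
      have hmono' : b x₀ ≤ b (x - 1) := by
        rcases Nat.eq_or_lt_of_le (show x₀ ≤ x - 1 by omega) with h | h
        · rw [h]
        · exact (hb ⟨hx₀1, hx₀s⟩ ⟨hx11, hx1s⟩ h).le
      obtain ⟨_, _, _, h4⟩ := hsw (x - 1) hx11 hx1s
      exact hnot ⟨y₁, hy₁, hm_eq ▸ h4 m hmi (by omega)⟩
  refine ⟨⟨x₀, hPx₀, huniq⟩, ?_⟩
  intro x hx1 hxs hex hnot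
  have : x = x₀ := huniq x ⟨⟨hx1, hxs⟩, hex, hnot⟩
  rw [this, ← hbx₀]
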